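/- Let d be a positive rational with √d irrational, and let a ∈ ℚ[√d] with 1 < ā < a. Let T be the set of b ∈ ℚ[√d] with 1 < b̄ < b, b̄/b ≥ ā/a, and ln G(b)/ln G(b̄) ≥ ln G(a)/ln G(ā); let P be the set of b ∈ ℚ[√d] with 0 < b̄ < b and b̄/b ≥ ā/a. If x ∈ T and y ∈ P, then ln G(x+y) / ln G(x̄+ȳ) > ln G(a) / ln G(ā), where G(t) = (t−1)/(t+1). -/

import Mathlib

noncomputable section

/-- `G(x) = (x-1)/(x+1)`. -/
def Gfun (x : ℝ) : ℝ := (x - 1) / (x + 1)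

namespace Stmt17

open Real Set Filter Topology


/-- sinh t < t * cosh t for t > 0 -/
lemma sinh_lt_mul_cosh {t : ℝ} (ht : 0 < t) : sinh t < t * cosh t := by
  have h : StrictMonoOn (fun t : ℝ => t * cosh t - sinh t) (Ici 0) := by
    apply strictMonoOn_of_deriv_pos (convex_Ici 0)
    · fun_prop
    · intro s hs
      rw [interior_Ici, mem_Ioi] at hs
      have h1 : HasDerivAt (fun t : ℝ => t * cosh t - sinh t)
          (1 * cosh s + s * sinh s - cosh s) s :=
        ((hasDerivAt_id s).mul (Real.hasDerivAt_cosh s)).sub (Real.hasDerivAt_sinh s)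
      rw [h1.deriv]
      have := Real.sinh_pos_iff.2 hs
      nlinarith
  have h2 := h self_mem_Ici (mem_Ici.2 ht.le) ht
  simpa using h2

/-- b * sinh a < a * sinh b for 0 < a < b  (sinh t / t strictly increasing) -/
lemma mul_sinh_lt {a b : ℝ} (ha : 0 < a) (hab : a < b) : b * sinh a < a * sinh b := by
  have h : StrictMonoOn (fun t : ℝ => sinh t / t) (Ioi 0) := by
    apply strictMonoOn_of_deriv_pos (convex_Ioi 0)
    · apply ContinuousOn.div Real.continuous_sinh.continuousOn continuousOn_id
      intro s hs; exact ne_of_gt hs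
    · intro s hs
      rw [interior_Ioi, mem_Ioi] at hs
      have h1 : HasDerivAt (fun t : ℝ => sinh t / t)
          ((cosh s * s - sinh s * 1) / s ^ 2) s :=
        (Real.hasDerivAt_sinh s).div (hasDerivAt_id s) (ne_of_gt hs)
      rw [h1.deriv]
      have h2 := sinh_lt_mul_cosh hs
      have : (0:ℝ) < s ^ 2 := by positivity
      apply div_pos (by nlinarith) this
  have h2 := h (mem_Ioi.2 ha) (mem_Ioi.2 (ha.trans hab)) hab
  rw [div_lt_div_iff₀ ha (ha.trans hab)] at h2
  linarith

/-- t * coth t strictly increasing: s cosh s sinh t < t cosh t sinh s for 0 < s < t -/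
lemma coth_mul_lt {s t : ℝ} (hs : 0 < s) (hst : s < t) :
    s * cosh s * sinh t < t * cosh t * sinh s := by
  have h := mul_sinh_lt (a := t - s) (b := t + s) (by linarith) (by linarith)
  rw [Real.sinh_add, Real.sinh_sub] at h
  nlinarith [h]

/-- sinh (r*s) < r * sinh s for 0 < r < 1, 0 < s -/
lemma sinh_mul_lt {r s : ℝ} (hr0 : 0 < r) (hr1 : r < 1) (hs : 0 < s) :
    sinh (r * s) < r * sinh s := by
  have h := mul_sinh_lt (a := r * s) (b := s) (by positivity) (by nlinarith)
  have h2 : s * sinh (r * s) < s * (r * sinh s) := by nlinarith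
  exact lt_of_mul_lt_mul_left h2 hs.le

/-- sinh(r θ)/sinh θ strictly decreasing: for 0 < a < b,
    sinh (r*b) * sinh a < sinh (r*a) * sinh b -/
lemma CM {r : ℝ} (hr0 : 0 < r) (hr1 : r < 1) {a b : ℝ} (ha : 0 < a) (hab : a < b) :
    sinh (r * b) * sinh a < sinh (r * a) * sinh b := by
  have h : StrictAntiOn (fun t : ℝ => sinh (r * t) / sinh t) (Ioi 0) := by
    apply strictAntiOn_of_deriv_neg (convex_Ioi 0)
    · apply ContinuousOn.div
      · exact (Real.continuous_sinh.comp (continuous_const.mul continuous_id)).continuousOn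
      · exact Real.continuous_sinh.continuousOn
      · intro s hs; exact ne_of_gt (Real.sinh_pos_iff.2 hs)
    · intro s hs
      rw [interior_Ioi, mem_Ioi] at hs
      have hsinh : sinh s ≠ 0 := ne_of_gt (Real.sinh_pos_iff.2 hs)
      have hin : HasDerivAt (fun t : ℝ => sinh (r * t)) (cosh (r * s) * r) s := by
        have := (Real.hasDerivAt_sinh (r * s)).comp s ((hasDerivAt_id s).const_mul r)
        exact this.congr_deriv (by ring)
      have h1 : HasDerivAt (fun t : ℝ => sinh (r * t) / sinh t)
          ((cosh (r * s) * r * sinh s - sinh (r * s) * cosh s) / (sinh s) ^ 2) s :=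
        hin.div (Real.hasDerivAt_sinh s) hsinh
      rw [h1.deriv]
      apply div_neg_of_neg_of_pos _ (by positivity)
      have hc := coth_mul_lt (s := r * s) (t := s) (by positivity) (by nlinarith)
      have h2 : s * (cosh (r * s) * r * sinh s) < s * (sinh (r * s) * cosh s) := by nlinarith
      have h3 := lt_of_mul_lt_mul_left h2 hs.le
      linarith
  have h2 := h (mem_Ioi.2 ha) (mem_Ioi.2 (ha.trans hab)) hab
  rw [div_lt_div_iff₀ (Real.sinh_pos_iff.2 (ha.trans hab)) (Real.sinh_pos_iff.2 ha)] at h2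
  linarith

/-- tanh(r θ)/tanh θ strictly increasing: for 0 < a < b,
    tanh (r*a) * tanh b < tanh (r*b) * tanh a -/
lemma tanh_ratio {r : ℝ} (hr0 : 0 < r) (hr1 : r < 1) {a b : ℝ} (ha : 0 < a) (hab : a < b) :
    tanh (r * a) * tanh b < tanh (r * b) * tanh a := by
  have key := CM hr0 hr1 (a := b - a) (b := b + a) (by linarith) (by linarith)
  have e1 : r * (b + a) = r * b + r * a := by ring
  have e2 : r * (b - a) = r * b - r * a := by ring
  rw [e1, e2, Real.sinh_add, Real.sinh_sub, Real.sinh_add, Real.sinh_sub] at key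
  rw [Real.tanh_eq_sinh_div_cosh, Real.tanh_eq_sinh_div_cosh, Real.tanh_eq_sinh_div_cosh,
    Real.tanh_eq_sinh_div_cosh, div_mul_div_comm, div_mul_div_comm,
    div_lt_div_iff₀ (by positivity) (by positivity)]
  nlinarith [key]


/-- the half-log coordinate -/
def th (t : ℝ) : ℝ := Real.log ((t + 1) / (t - 1)) / 2

lemma th_pos {t : ℝ} (ht : 1 < t) : 0 < th t := by
  have h1 : 1 < (t + 1) / (t - 1) := (one_lt_div (by linarith)).2 (by linarith)
  have := Real.log_pos h1
  unfold th; linarith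

lemma exp_th_sq {t : ℝ} (ht : 1 < t) : exp (th t) ^ 2 = (t + 1) / (t - 1) := by
  have h0 : (0:ℝ) < (t + 1) / (t - 1) := div_pos (by linarith) (by linarith)
  rw [th, sq, ← Real.exp_add, add_halves, Real.exp_log h0]

lemma sinh_th_sq {t : ℝ} (ht : 1 < t) : sinh (th t) ^ 2 * (t ^ 2 - 1) = 1 := by
  have hE2 := exp_th_sq ht
  have hE0 : (0:ℝ) < exp (th t) := exp_pos _
  set E := exp (th t) with hE
  have hEne : E ≠ 0 := ne_of_gt hE0
  have h1 : E ^ 2 * (t - 1) = t + 1 := by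
    rw [hE2, div_mul_cancel₀ _ (by linarith : t - 1 ≠ 0)]
  have hs : sinh (th t) = (E - E⁻¹) / 2 := by
    rw [Real.sinh_eq, Real.exp_neg]
  rw [hs]
  have ht1 : t - 1 ≠ 0 := by intro h; linarith [h]
  have ht2 : t + 1 ≠ 0 := by intro h; linarith [h]
  field_simp
  ring_nf
  nlinarith [h1, sq_nonneg E, sq_nonneg (E⁻¹), mul_inv_cancel₀ hEne]

lemma tanh_th {t : ℝ} (ht : 1 < t) : tanh (th t) = 1 / t := by
  have hE2 := exp_th_sq ht
  have hE0 : (0:ℝ) < exp (th t) := exp_pos _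
  set E := exp (th t) with hE
  have hEne : E ≠ 0 := ne_of_gt hE0
  have h1 : E ^ 2 * (t - 1) = t + 1 := by
    rw [hE2, div_mul_cancel₀ _ (by linarith : t - 1 ≠ 0)]
  have ht0 : (0:ℝ) < t := by linarith
  rw [Real.tanh_eq_sinh_div_cosh, Real.sinh_eq, Real.cosh_eq, Real.exp_neg]
  have hden : (0:ℝ) < E + E⁻¹ := by positivity
  have hinv : E * E⁻¹ = 1 := mul_inv_cancel₀ hEne
  field_simp
  ring_nf
  nlinarith [h1, hinv, sq_nonneg E, hE0, ht0]

lemma log_gfun {t : ℝ} (ht : 1 < t) : Real.log (Gfun t) = -(2 * th t) := by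
  have h : Gfun t = ((t + 1) / (t - 1))⁻¹ := by
    rw [Gfun, inv_div]
  rw [h, Real.log_inv, th]; ring

lemma log_gfun_neg {t : ℝ} (ht : 1 < t) : Real.log (Gfun t) < 0 := by
  rw [log_gfun ht]; have := th_pos ht; linarith

lemma th_anti {p q : ℝ} (hp : 1 < p) (hpq : p < q) : th q < th p := by
  have h1 : (0:ℝ) < (q + 1) / (q - 1) := div_pos (by linarith) (by linarith)
  have h2 : (q + 1) / (q - 1) < (p + 1) / (p - 1) := by
    rw [div_lt_div_iff₀ (by linarith) (by linarith)]; nlinarith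
  have := Real.log_lt_log h1 h2
  rw [th, th]; linarith

/-- Claim C: the crossing inequality -/
lemma claimC {a abar u v r : ℝ} (ha1 : 1 < abar) (ha2 : abar < a)
    (hv : 1 < v) (hvu : v < u)
    (hra : Real.log (Gfun a) = r * Real.log (Gfun abar))
    (hru : Real.log (Gfun u) = r * Real.log (Gfun v))
    (hc : abar * u ≤ a * v) :
    a * (v ^ 2 - 1) < r * abar * (u ^ 2 - 1) := by
  have ha0 : 1 < a := ha1.trans ha2
  have hu : 1 < u := hv.trans hvu
  have hthab : 0 < th abar := th_pos ha1
  have hθv : 0 < th v := th_pos hv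
  have hthA : th a = r * th abar := by
    have e1 := log_gfun ha0; have e2 := log_gfun ha1
    rw [e1, e2] at hra; linarith
  have hthU : th u = r * th v := by
    have e1 := log_gfun hu; have e2 := log_gfun hv
    rw [e1, e2] at hru; linarith
  have hr0 : 0 < r := by
    have h1 := th_pos ha0
    rw [hthA] at h1
    nlinarith
  have hr1 : r < 1 := by
    have h1 := th_anti ha1 ha2
    rw [hthA] at h1
    nlinarith
  -- θā ≤ θv
  have hθ : th abar ≤ th v := by
    by_contra hlt
    push_neg at hlt
    have h1 := tanh_ratio hr0 hr1 hθv hlt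
    rw [← hthU, ← hthA, tanh_th hu, tanh_th ha1, tanh_th ha0, tanh_th hv] at h1
    rw [div_mul_div_comm, div_mul_div_comm, div_lt_div_iff₀ (by positivity) (by positivity)] at h1
    nlinarith
  set s1 := sinh (r * th abar) with hs1def
  set c1 := cosh (r * th abar) with hc1def
  set Sab := sinh (th abar) with hSabddef
  set Cab := cosh (th abar) with hCabdef
  set Su := sinh (r * th v) with hSudef
  set Sv := sinh (th v) with hSvdef
  have hs1 : 0 < s1 := Real.sinh_pos_iff.2 (by positivity)
  have hc1 : 0 < c1 := Real.cosh_pos _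
  have hSabd : 0 < Sab := Real.sinh_pos_iff.2 hthab
  have hCab : 0 < Cab := Real.cosh_pos _
  have hSu : 0 < Su := Real.sinh_pos_iff.2 (by positivity)
  have hSv : 0 < Sv := Real.sinh_pos_iff.2 hθv
  -- h1 : Su * Sab ≤ s1 * Sv
  have h1 : Su * Sab ≤ s1 * Sv := by
    rcases eq_or_lt_of_le hθ with he | hlt
    · rw [hSudef, hSvdef, hs1def, hSabddef, ← he]
    · exact (CM hr0 hr1 hthab hlt).le
  -- h2 : s1 * c1 < r * (Sab * Cab)
  have h2 : s1 * c1 < r * (Sab * Cab) := by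
    have h := sinh_mul_lt hr0 hr1 (s := 2 * th abar) (by positivity)
    rw [show r * (2 * th abar) = 2 * (r * th abar) by ring, Real.sinh_two_mul,
      Real.sinh_two_mul] at h
    linarith
  -- identities
  have hva : Sv ^ 2 * (v ^ 2 - 1) = 1 := sinh_th_sq hv
  have hua : Su ^ 2 * (u ^ 2 - 1) = 1 := by
    have := sinh_th_sq hu
    rw [hthU] at this
    exact this
  have haas : a * s1 = c1 := by
    have h := tanh_th ha0
    rw [hthA, Real.tanh_eq_sinh_div_cosh] at h
    rw [div_eq_div_iff (by positivity) (by positivity)] at h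
    linarith
  have habs : abar * Sab = Cab := by
    have h := tanh_th ha1
    rw [Real.tanh_eq_sinh_div_cosh] at h
    rw [div_eq_div_iff (by positivity) (by positivity)] at h
    linarith
  -- key : a * Su^2 < r * abar * Sv^2
  have h1sq : Su ^ 2 * Sab ^ 2 ≤ s1 ^ 2 * Sv ^ 2 := by
    nlinarith [mul_le_mul h1 h1 (by positivity : (0:ℝ) ≤ Su * Sab) (by positivity : (0:ℝ) ≤ s1 * Sv)]
  have h1c : c1 * (Su ^ 2 * Sab ^ 2) ≤ c1 * (s1 ^ 2 * Sv ^ 2) :=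
    mul_le_mul_of_nonneg_left h1sq hc1.le
  have h2s : s1 * c1 * (s1 * Sv ^ 2) < r * (Sab * Cab) * (s1 * Sv ^ 2) :=
    mul_lt_mul_of_pos_right h2 (by positivity)
  have key : a * Su ^ 2 < r * abar * Sv ^ 2 := by
    have G2 : a * Su ^ 2 * (s1 * Sab ^ 2) < r * abar * Sv ^ 2 * (s1 * Sab ^ 2) := by
      calc a * Su ^ 2 * (s1 * Sab ^ 2) = c1 * (Su ^ 2 * Sab ^ 2) := by rw [← haas]; ring
        _ ≤ c1 * (s1 ^ 2 * Sv ^ 2) := h1c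
        _ = s1 * c1 * (s1 * Sv ^ 2) := by ring
        _ < r * (Sab * Cab) * (s1 * Sv ^ 2) := h2s
        _ = r * abar * Sv ^ 2 * (s1 * Sab ^ 2) := by rw [← habs]; ring
    exact lt_of_mul_lt_mul_right G2 (by positivity)
  -- convert back
  have hv2 : v ^ 2 - 1 = 1 / Sv ^ 2 := by
    rw [eq_div_iff (by positivity)]; linarith [hva]
  have hu2 : u ^ 2 - 1 = 1 / Su ^ 2 := by
    rw [eq_div_iff (by positivity)]; linarith [hua]
  rw [hv2, hu2, mul_one_div, mul_one_div, div_lt_div_iff₀ (by positivity) (by positivity)]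
  linarith [key]


lemma log_gfun_split {t : ℝ} (ht : 1 < t) :
    Real.log (Gfun t) = Real.log (t - 1) - Real.log (t + 1) := by
  rw [Gfun, Real.log_div (by linarith) (by linarith)]


set_option maxHeartbeats 2000000 in
theorem statement17' (a abar x xbar y ybar : ℝ)
    (ha1 : 1 < abar) (ha2 : abar < a)
    (hx1 : 1 < xbar) (hx2 : xbar < x)
    (hx3 : abar / a ≤ xbar / x)
    (hx4 : Real.log (Gfun a) / Real.log (Gfun abar) ≤
      Real.log (Gfun x) / Real.log (Gfun xbar))
    (hy1 : 0 < ybar) (hy2 : ybar < y)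
    (hy3 : abar / a ≤ ybar / y) :
    Real.log (Gfun a) / Real.log (Gfun abar) <
      Real.log (Gfun (x + y)) / Real.log (Gfun (xbar + ybar)) := by
  have ha0 : (1:ℝ) < a := ha1.trans ha2
  have hx0 : (1:ℝ) < x := hx1.trans hx2
  have hy0 : (0:ℝ) < y := lt_trans hy1 hy2
  have hLab : Real.log (Gfun abar) < 0 := log_gfun_neg ha1
  have hLxb : Real.log (Gfun xbar) < 0 := log_gfun_neg hx1
  set r := Real.log (Gfun a) / Real.log (Gfun abar) with hrdef
  have hra : Real.log (Gfun a) = r * Real.log (Gfun abar) := by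
    rw [hrdef, div_mul_cancel₀ _ (ne_of_lt hLab)]
  have hr0 : 0 < r := div_pos_of_neg_of_neg (log_gfun_neg ha0) hLab
  have habx : abar * x ≤ a * xbar := by
    rw [div_le_div_iff₀ (by linarith) (by linarith)] at hx3; linarith
  have haby : abar * y ≤ a * ybar := by
    rw [div_le_div_iff₀ (by linarith) hy0] at hy3; linarith
  set D : ℝ → ℝ := fun s =>
    Real.log (Gfun (x + s * y)) - r * Real.log (Gfun (xbar + s * ybar)) with hDdef
  have harg1 : ∀ s : ℝ, 0 ≤ s → 1 < x + s * y := by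
    intro s hs; nlinarith [mul_nonneg hs hy0.le]
  have harg2 : ∀ s : ℝ, 0 ≤ s → 1 < xbar + s * ybar := by
    intro s hs; nlinarith [mul_nonneg hs hy1.le]
  set dfun : ℝ → ℝ := fun s => (y / (x + s * y - 1) - y / (x + s * y + 1))
      - r * (ybar / (xbar + s * ybar - 1) - ybar / (xbar + s * ybar + 1)) with hdfdef
  have hD : ∀ s : ℝ, 0 ≤ s → HasDerivAt D (dfun s) s := by
    intro s hs
    have h1 : 1 < x + s * y := harg1 s hs
    have h2 : 1 < xbar + s * ybar := harg2 s hs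
    have hAff1 : HasDerivAt (fun t : ℝ => x + t * y) y s := by
      simpa using ((hasDerivAt_id s).mul_const y).const_add x
    have hAff2 : HasDerivAt (fun t : ℝ => xbar + t * ybar) ybar s := by
      simpa using ((hasDerivAt_id s).mul_const ybar).const_add xbar
    have l1 : HasDerivAt (fun t : ℝ => Real.log (x + t * y - 1)) (y / (x + s * y - 1)) s :=
      (hAff1.sub_const 1).log (by intro h; rw [sub_eq_zero] at h; linarith)
    have l2 : HasDerivAt (fun t : ℝ => Real.log (x + t * y + 1)) (y / (x + s * y + 1)) s :=
      (hAff1.add_const 1).log (by intro h; nlinarith [h])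
    have l3 : HasDerivAt (fun t : ℝ => Real.log (xbar + t * ybar - 1))
        (ybar / (xbar + s * ybar - 1)) s :=
      (hAff2.sub_const 1).log (by intro h; rw [sub_eq_zero] at h; linarith)
    have l4 : HasDerivAt (fun t : ℝ => Real.log (xbar + t * ybar + 1))
        (ybar / (xbar + s * ybar + 1)) s :=
      (hAff2.add_const 1).log (by intro h; nlinarith [h])
    have lg : HasDerivAt (fun t : ℝ => (Real.log (x + t * y - 1) - Real.log (x + t * y + 1))
        - r * (Real.log (xbar + t * ybar - 1) - Real.log (xbar + t * ybar + 1))) (dfun s) s :=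
      (l1.sub l2).sub ((l3.sub l4).const_mul r)
    apply lg.congr_of_eventuallyEq
    have hc1 : Continuous (fun t : ℝ => x + t * y) :=
      continuous_const.add (continuous_id.mul continuous_const)
    have hc2 : Continuous (fun t : ℝ => xbar + t * ybar) :=
      continuous_const.add (continuous_id.mul continuous_const)
    have hUopen : IsOpen ({t : ℝ | 1 < x + t * y} ∩ {t : ℝ | 1 < xbar + t * ybar}) :=
      (isOpen_lt continuous_const hc1).inter (isOpen_lt continuous_const hc2)
    filter_upwards [hUopen.mem_nhds ⟨h1, h2⟩] with t ht
    rw [hDdef]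
    simp only
    rw [log_gfun_split ht.1, log_gfun_split ht.2]
  have hkey : ∀ s : ℝ, 0 ≤ s → D s = 0 → dfun s < 0 := by
    intro s hs h0
    have hu : 1 < x + s * y := harg1 s hs
    have hv : 1 < xbar + s * ybar := harg2 s hs
    have hvu : xbar + s * ybar < x + s * y := by
      nlinarith [mul_nonneg hs (sub_nonneg.2 hy2.le)]
    have hru : Real.log (Gfun (x + s * y)) = r * Real.log (Gfun (xbar + s * ybar)) := by
      rw [hDdef] at h0; simp only at h0; linarith
    have hc : abar * (x + s * y) ≤ a * (xbar + s * ybar) := by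
      nlinarith [mul_le_mul_of_nonneg_left haby hs, habx]
    have CC := claimC ha1 ha2 hv hvu hra hru hc
    have hu21 : (0:ℝ) < (x + s * y) ^ 2 - 1 := by nlinarith
    have hv21 : (0:ℝ) < (xbar + s * ybar) ^ 2 - 1 := by nlinarith
    have e1 : y / (x + s * y - 1) - y / (x + s * y + 1) = 2 * y / ((x + s * y) ^ 2 - 1) := by
      rw [div_sub_div _ _ (by intro h; rw [sub_eq_zero] at h; linarith)
        (by intro h; nlinarith [h]), div_eq_div_iff
        (by nlinarith : (0:ℝ) < (x + s * y - 1) * (x + s * y + 1)).ne' hu21.ne']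
      ring
    have e2 : ybar / (xbar + s * ybar - 1) - ybar / (xbar + s * ybar + 1)
        = 2 * ybar / ((xbar + s * ybar) ^ 2 - 1) := by
      rw [div_sub_div _ _ (by intro h; rw [sub_eq_zero] at h; linarith)
        (by intro h; nlinarith [h]), div_eq_div_iff
        (by nlinarith : (0:ℝ) < (xbar + s * ybar - 1) * (xbar + s * ybar + 1)).ne' hv21.ne']
      ring
    rw [hdfdef]
    simp only
    rw [e1, e2, sub_neg, mul_div_assoc']
    rw [div_lt_div_iff₀ hu21 hv21]
    have s1 : a * (2 * y * ((xbar + s * ybar) ^ 2 - 1))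
        < a * (r * (2 * ybar) * ((x + s * y) ^ 2 - 1)) := by
      linarith [mul_le_mul_of_nonneg_left haby (mul_pos hr0 hu21).le,
        mul_lt_mul_of_pos_left CC hy0]
    have := lt_of_mul_lt_mul_left s1 (by linarith : (0:ℝ) ≤ a)
    linarith
  -- D 0 ≤ 0
  have hD0 : D 0 ≤ 0 := by
    rw [hDdef]; simp only [zero_mul, add_zero]
    have h := (le_div_iff_of_neg hLxb).1 hx4
    linarith
  -- reduce goal to D 1 < 0
  have hLxyb : Real.log (Gfun (xbar + ybar)) < 0 := log_gfun_neg (by linarith)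
  rw [lt_div_iff_of_neg hLxyb]
  by_contra hcon
  push_neg at hcon
  have hD1 : 0 ≤ D 1 := by
    rw [hDdef]; simp only [one_mul]; linarith
  -- find t0 with D t0 < 0
  obtain ⟨t0, ht0mem, ht0neg⟩ : ∃ t0, t0 ∈ Ico (0:ℝ) 1 ∧ D t0 < 0 := by
    rcases lt_or_eq_of_le hD0 with h0 | h0
    · exact ⟨0, ⟨le_refl 0, zero_lt_one⟩, h0⟩
    · have hd0 := hkey 0 le_rfl h0
      have hslope' : Tendsto (slope D 0) (𝓝[>] 0) (𝓝 (dfun 0)) :=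
        (hasDerivAt_iff_tendsto_slope.1 (hD 0 le_rfl)).mono_left
          (nhdsWithin_mono 0 (fun z hz => ne_of_gt hz))
      have hev : ∀ᶠ t in 𝓝[>] (0:ℝ), slope D 0 t < 0 :=
        hslope'.eventually (Iio_mem_nhds hd0)
      have hmem : Ioo (0:ℝ) 1 ∈ 𝓝[>] (0:ℝ) :=
        Ioo_mem_nhdsGT zero_lt_one
      obtain ⟨t0, hs, hmemt⟩ := (hev.and (eventually_of_mem hmem (fun z hz => hz))).exists
      refine ⟨t0, ⟨hmemt.1.le, hmemt.2⟩, ?_⟩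
      have hq : (D t0 - D 0) / (t0 - 0) < 0 := by rw [← slope_def_field]; exact hs
      rw [h0, sub_zero, sub_zero] at hq
      rcases div_neg_iff.1 hq with ⟨_, hneg⟩ | ⟨hneg, _⟩
      · linarith [hmemt.1]
      · exact hneg
  set E : Set ℝ := Icc t0 1 ∩ D ⁻¹' (Ici 0) with hEdef
  have hcont : ContinuousOn D (Icc t0 1) := fun s hs =>
    ((hD s (le_trans ht0mem.1 hs.1)).continuousAt).continuousWithinAt
  have hclosed : IsClosed E := hcont.preimage_isClosed_of_isClosed isClosed_Icc isClosed_Ici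
  have hne : (1:ℝ) ∈ E := ⟨⟨ht0mem.2.le, le_refl 1⟩, hD1⟩
  have hbdd : BddBelow E := ⟨t0, fun s hs => hs.1.1⟩
  set s1 := sInf E with hs1def
  have hs1mem : s1 ∈ E := hclosed.csInf_mem ⟨1, hne⟩ hbdd
  have hs1low : t0 ≤ s1 := hs1mem.1.1
  have hs1hi : s1 ≤ 1 := hs1mem.1.2
  have hs1ne : t0 < s1 := by
    rcases lt_or_eq_of_le hs1low with h | h
    · exact h
    · exfalso; have := hs1mem.2; rw [← h] at this; exact absurd this (not_le.2 ht0neg)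
  have hbelow : ∀ s, t0 ≤ s → s < s1 → D s < 0 := by
    intro s hts hss
    by_contra hge; push_neg at hge
    have hsE : s ∈ E := ⟨⟨hts, hss.le.trans hs1hi⟩, hge⟩
    exact absurd (csInf_le hbdd hsE) (not_le.2 hss)
  have hs1le : D s1 ≤ 0 := by
    have htd : Tendsto D (𝓝[<] s1) (𝓝 (D s1)) :=
      ((hD s1 (le_trans ht0mem.1 hs1low)).continuousAt).continuousWithinAt
    refine le_of_tendsto htd ?_
    filter_upwards [Ico_mem_nhdsLT hs1ne] with s hs
    exact (hbelow s hs.1 hs.2).le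
  have hs1zero : D s1 = 0 := le_antisymm hs1le hs1mem.2
  have hder := hkey s1 (le_trans ht0mem.1 hs1low) hs1zero
  have hslope' : Tendsto (slope D s1) (𝓝[<] s1) (𝓝 (dfun s1)) :=
    (hasDerivAt_iff_tendsto_slope.1 (hD s1 (le_trans ht0mem.1 hs1low))).mono_left
      (nhdsWithin_mono s1 (fun z hz => ne_of_lt hz))
  have hgez : 0 ≤ dfun s1 := by
    refine ge_of_tendsto hslope' ?_
    filter_upwards [Ico_mem_nhdsLT hs1ne] with s hs
    have hDs := hbelow s hs.1 hs.2
    have heq : slope D s1 s = D s / (s - s1) := by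
      rw [slope_def_field, hs1zero, sub_zero]
    rw [heq]
    exact (div_pos_of_neg_of_neg hDs (by linarith [hs.2])).le
  linarith

end Stmt17

/-- **Key step for the logarithmic inequality.** If `x ∈ T` (conditions (i),(ii),(iii)) and
`y ∈ P` (conditions (i'),(ii)), then `x + y` satisfies the strict inequality
`ln G(x+y)/ln G(x̄+ȳ) > ln G(a)/ln G(ā)`. -/
theorem statement17 (d : ℚ) (hd : 0 < d) (hirr : Irrational (Real.sqrt d))
    (pa qa px qx py qy : ℚ) (a abar x xbar y ybar : ℝ)
    (hae : a = pa + qa * Real.sqrt d) (habar : abar = pa - qa * Real.sqrt d)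
    (hxe : x = px + qx * Real.sqrt d) (hxbar : xbar = px - qx * Real.sqrt d)
    (hye : y = py + qy * Real.sqrt d) (hybar : ybar = py - qy * Real.sqrt d)
    (ha1 : 1 < abar) (ha2 : abar < a)
    (hx1 : 1 < xbar) (hx2 : xbar < x)
    (hx3 : abar / a ≤ xbar / x)
    (hx4 : Real.log (Gfun a) / Real.log (Gfun abar) ≤
      Real.log (Gfun x) / Real.log (Gfun xbar))
    (hy1 : 0 < ybar) (hy2 : ybar < y)
    (hy3 : abar / a ≤ ybar / y) :
    Real.log (Gfun a) / Real.log (Gfun abar) <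
      Real.log (Gfun (x + y)) / Real.log (Gfun (xbar + ybar)) :=
  Stmt17.statement17' a abar x xbar y ybar ha1 ha2 hx1 hx2 hx3 hx4 hy1 hy2 hy3
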